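/- Let p and π be probability mass functions on A×B with ||p - π||₁ < 2ε, and let b ∈ B satisfy p_B(b) > 0 and π_B(b) > 0. Then the L1 distance between the conditional distributions p(·|b) and π(·|b) on A is at most 4ε / π_B(b). -/

import Mathlib

/-- If `‖p - π‖₁ < 2ε` and `b` has positive marginal mass under both `p` and `π`,
then the conditional distributions on `A` given `b` satisfy
`‖p(·|b) - π(·|b)‖₁ ≤ 4ε / π_B(b)`. -/
theorem conditional_L1_bound
    {A B : Type*} [Fintype A] [Fintype B] [Nonempty A] [Nonempty B]
    {ε : ℝ} (hε : 0 < ε)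
    (p π : A × B → ℝ)
    (hp0 : ∀ a, 0 ≤ p a) (hp1 : ∑ a, p a = 1)
    (hπ0 : ∀ a, 0 ≤ π a) (hπ1 : ∑ a, π a = 1)
    (h : ∑ x : A × B, |p x - π x| < 2 * ε)
    (b : B)
    (hpb : 0 < ∑ a : A, p (a, b))
    (hπb : 0 < ∑ a : A, π (a, b)) :
    ∑ a : A, |p (a, b) / (∑ a' : A, p (a', b)) - π (a, b) / (∑ a' : A, π (a', b))|
      ≤ 4 * ε / (∑ a' : A, π (a', b)) := by
  set pB := ∑ a' : A, p (a', b) with hpB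
  set πB := ∑ a' : A, π (a', b) with hπB
  have hpBne : pB ≠ 0 := ne_of_gt hpb
  have hπBne : πB ≠ 0 := ne_of_gt hπb
  have hS : ∑ a : A, |p (a, b) - π (a, b)| ≤ 2 * ε := by
    refine le_of_lt (lt_of_le_of_lt ?_ h)
    rw [Fintype.sum_prod_type]
    refine Finset.sum_le_sum fun a _ => ?_
    exact Finset.single_le_sum (f := fun b' => |p (a, b') - π (a, b')|)
      (fun b' _ => abs_nonneg _) (Finset.mem_univ b)
  have hD : |πB - pB| ≤ ∑ a : A, |p (a, b) - π (a, b)| := by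
    calc |πB - pB| = |∑ a : A, (π (a, b) - p (a, b))| := by
          rw [hπB, hpB, ← Finset.sum_sub_distrib]
      _ ≤ ∑ a : A, |π (a, b) - p (a, b)| := Finset.abs_sum_le_sum_abs _ _
      _ = ∑ a : A, |p (a, b) - π (a, b)| := by simp [abs_sub_comm]
  have key : ∀ a : A, |p (a, b) / pB - π (a, b) / πB| ≤
      |p (a, b) - π (a, b)| / πB + p (a, b) * |πB - pB| / (pB * πB) := by
    intro a
    have heq : p (a, b) / pB - π (a, b) / πB =
        (p (a, b) - π (a, b)) / πB + p (a, b) * (πB - pB) / (pB * πB) := by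
      field_simp
      ring
    rw [heq]
    refine le_trans (abs_add_le _ _) ?_
    have h1 : |(p (a, b) - π (a, b)) / πB| = |p (a, b) - π (a, b)| / πB := by
      rw [abs_div, abs_of_pos hπb]
    have h2 : |p (a, b) * (πB - pB) / (pB * πB)| = p (a, b) * |πB - pB| / (pB * πB) := by
      rw [abs_div, abs_mul, abs_of_nonneg (hp0 _), abs_of_pos (mul_pos hpb hπb)]
    rw [h1, h2]
  have hsum : ∑ a : A, |p (a, b) / pB - π (a, b) / πB| ≤
      (∑ a : A, |p (a, b) - π (a, b)|) / πB + |πB - pB| / πB := by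
    refine le_trans (Finset.sum_le_sum fun a _ => key a) ?_
    have h2 : ∑ a : A, p (a, b) * |πB - pB| / (pB * πB) = |πB - pB| / πB := by
      rw [← Finset.sum_div, ← Finset.sum_mul, ← hpB]
      field_simp
    rw [Finset.sum_add_distrib, ← Finset.sum_div, h2]
  refine le_trans hsum ?_
  rw [← add_div, div_le_div_iff₀ hπb hπb]
  have : (∑ a : A, |p (a, b) - π (a, b)|) + |πB - pB| ≤ 4 * ε := by
    nlinarith [hD, hS]
  nlinarith [this, hπb]
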